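/- For any odd c, the polynomial map f(x) = x·(2x + c) is a bijection on ℤ/2^nℤ for every n ≥ 1. -/

import Mathlib

theorem perm_poly_bijective_of_odd (n : ℕ) (hn : 1 ≤ n)
    (c : ZMod (2^n)) (hc : Odd c.val) :
    Function.Bijective (fun x : ZMod (2^n) => x * (2 * x + c)) := by
  have hN : NeZero (2^n) := ⟨by positivity⟩
  rw [Finite.injective_iff_bijective.symm]
  intro x y h
  simp only at h
  have key : (x - y) * (2*x + 2*y + c) = 0 := by linear_combination h
  have hdvd : (2 : ℕ) ∣ 2^n := dvd_pow_self 2 (by omega)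
  set a : ZMod (2^n) := 2*x + 2*y + c with ha
  have hφ : ∀ z : ZMod (2^n), ((z.val : ℕ) : ZMod 2) = ZMod.castHom hdvd (ZMod 2) z :=
    fun z => by rw [ZMod.castHom_apply, ZMod.natCast_val]
  have hc2 : ((c.val : ℕ) : ZMod 2) = 1 := by
    obtain ⟨k, hk⟩ := hc
    rw [hk]; push_cast
    rw [show (2 : ZMod 2) = 0 by decide]; ring
  have hφc : (ZMod.castHom hdvd (ZMod 2)) c = 1 := by rw [← hφ]; exact hc2
  have h2 : ((a.val : ℕ) : ZMod 2) = 1 := by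
    rw [hφ, ha, map_add, map_add, map_mul, map_mul, map_ofNat, hφc,
      show (2 : ZMod 2) = 0 by decide]
    ring
  have hodd : Odd a.val := by
    rw [Nat.odd_iff]
    have := congrArg ZMod.val h2
    rw [ZMod.val_natCast] at this
    exact this.trans (by decide)
  have hcop : (a.val).Coprime (2^n) :=
    Nat.Coprime.pow_right n (hodd.coprime_two_right)
  have hunit : IsUnit a :=
    (ZMod.natCast_rightInverse a) ▸ ((ZMod.isUnit_iff_coprime a.val (2^n)).mpr hcop)
  obtain ⟨u, hu⟩ := hunit
  rw [← hu] at key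
  exact sub_eq_zero.mp ((Units.mul_left_eq_zero u).mp key)
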